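/- Let X be a completely regular Hausdorff (Tychonoff) space containing a compact subspace K such that C_p(K) has property (B). Then C_p(X) also has property (B). -/

import Mathlib

open Set

lemma exists_extension_of_compact {X : Type*} [TopologicalSpace X] [CompletelyRegularSpace X]
    [T2Space X] {K : Set X} (hK : IsCompact K) (h : C(K, ℝ)) :
    ∃ g : C(X, ℝ), ∀ k : K, g k = h k := by
  set e : X → StoneCech X := stoneCechUnit with he_def
  have he : Continuous e := continuous_stoneCechUnit
  have hinj : Set.InjOn e K := by
    intro a _ b _ hab
    by_contra hne
    obtain ⟨f, hf, hfa, hfb⟩ := CompletelyRegularSpace.completely_regular a {b}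
      isClosed_singleton (by simpa using hne)
    have : f a = f b := eq_if_stoneCechUnit_eq hf hab
    have hb1 : f b = 1 := hfb rfl
    rw [hfa, hb1] at this
    exact zero_ne_one (congrArg Subtype.val this)
  have hL : IsCompact (e '' K) := hK.image he
  have hLc : IsClosed (e '' K) := hL.isClosed
  haveI : CompactSpace K := isCompact_iff_compactSpace.mp hK
  let φe : K ≃ (e '' K) := (Equiv.Set.imageOfInjOn e K hinj)
  have hφc : Continuous φe := Continuous.subtype_mk (he.comp continuous_subtype_val) _
  let φ : K ≃ₜ (e '' K) := hφc.homeoOfEquivCompactToT2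
  obtain ⟨G, hG⟩ := (h.comp (φ.symm : C(e '' K, K))).exists_restrict_eq hLc
  refine ⟨G.comp ⟨e, he⟩, fun k => ?_⟩
  have := congrArg (fun F => F (φ k)) hG
  simp only [ContinuousMap.restrict_apply, ContinuousMap.comp_apply] at this ⊢
  have hφk : ((φ k : StoneCech X)) = e k := rfl
  rw [hφk] at this
  show G (e k) = h k
  rw [this]
  congr 1
  exact φ.symm_apply_apply k

/-- The bump-function correction: for a point `x` outside a closed set and outside a finite
set (minus itself), there is a continuous function equal to `1` at `x` and `0` on the rest. -/
lemma exists_bump {X : Type*} [TopologicalSpace X] [CompletelyRegularSpace X] [T1Space X]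
    {C : Set X} (hC : IsClosed C) {x : X} (hx : x ∉ C) :
    ∃ ψ : C(X, ℝ), ψ x = 1 ∧ ∀ y ∈ C, ψ y = 0 := by
  obtain ⟨f, hf, hfx, hfC⟩ := CompletelyRegularSpace.completely_regular x C hC hx
  refine ⟨⟨fun y => 1 - (f y : ℝ), by fun_prop⟩, ?_, fun y hy => ?_⟩
  · simp [hfx]
  · have : f y = 1 := hfC hy
    simp [this]

/-- A topological space `X` has property (B) if it can be covered by countably many closed
nowhere-dense sets `A n` such that every compact subset of `X` is contained in some `A n`. -/
def PropertyB (X : Type*) [TopologicalSpace X] : Prop :=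
  ∃ A : ℕ → Set X,
    (∀ n, IsClosed (A n)) ∧ (∀ n, interior (A n) = ∅) ∧
    (⋃ n, A n) = Set.univ ∧
    ∀ C : Set X, IsCompact C → ∃ n, C ⊆ A n

/-- The topology of pointwise convergence on `C(X, ℝ)`. -/
noncomputable def pointwiseTopology (X : Type*) [TopologicalSpace X] :
    TopologicalSpace C(X, ℝ) :=
  TopologicalSpace.induced (fun f : C(X, ℝ) => (f : X → ℝ)) Pi.topologicalSpace

/-- Let `X` be a Tychonoff (completely regular Hausdorff) space containing a compact
subspace `K` such that `C_p(K)` has property (B). Then `C_p(X)` also has property (B). -/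
theorem statement12 (X : Type*) [TopologicalSpace X] [CompletelyRegularSpace X] [T2Space X]
    (K : Set X) (hK : IsCompact K)
    (hB : @PropertyB C(K, ℝ) (pointwiseTopology K)) :
    @PropertyB C(X, ℝ) (pointwiseTopology X) := by
  classical
  letI tX : TopologicalSpace C(X, ℝ) := pointwiseTopology X
  letI tK : TopologicalSpace C(K, ℝ) := pointwiseTopology K
  obtain ⟨A, hAc, hAi, hAu, hAk⟩ := hB
  set r : C(X, ℝ) → C(K, ℝ) := fun g => g.restrict K with hr_def
  have h1 : Continuous fun g : C(X, ℝ) => (g : X → ℝ) := continuous_induced_dom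
  have hrc : Continuous r := by
    refine continuous_induced_rng.mpr ?_
    exact continuous_pi fun k : K =>
      (continuous_apply (A := fun _ : X => ℝ) (k : X)).comp h1
  refine ⟨fun n => r ⁻¹' A n, fun n => (hAc n).preimage hrc, fun n => ?_, ?_, ?_⟩
  · -- nowhere dense
    rw [eq_empty_iff_forall_notMem]
    intro f hf
    obtain ⟨W, hW, hWeq⟩ := isOpen_induced_iff.mp
      (isOpen_interior (s := r ⁻¹' A n) (X := C(X, ℝ)))
    have hfW : (f : X → ℝ) ∈ W := by
      rw [← hWeq] at hf; exact hf
    obtain ⟨S, u, hu, hsub⟩ := (@isOpen_pi_iff X (fun _ : X => ℝ) (fun _ => inferInstance) W).mp hW _ hfW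
    -- the corresponding basic open set in C(K, ℝ)
    set S' : Set K := Subtype.val ⁻¹' (S : Set X) with hS'_def
    have hS'fin : S'.Finite := S.finite_toSet.preimage Subtype.val_injective.injOn
    set T : Set C(K, ℝ) :=
      (fun h : C(K, ℝ) => (h : K → ℝ)) ⁻¹' (S'.pi fun k => u (k : X)) with hT_def
    have hTopen : IsOpen T :=
      isOpen_induced (isOpen_set_pi hS'fin fun k hk => (hu (k : X) hk).1)
    have hTsub : T ⊆ A n := by
      intro h hh
      obtain ⟨g₀, hg₀⟩ := exists_extension_of_compact hK h
      set D : Finset X := S.filter (fun x => x ∉ K) with hD_def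
      have hbump : ∀ x ∈ D, ∃ ψ : C(X, ℝ),
          ψ x = 1 ∧ ∀ y ∈ K ∪ ((D : Set X) \ {x}), ψ y = 0 := by
        intro x hxD
        have hxK : x ∉ K := (Finset.mem_filter.mp hxD).2
        refine exists_bump (hK.isClosed.union ?_) ?_
        · exact ((D.finite_toSet).subset diff_subset).isClosed
        · rintro (hx | ⟨-, hx⟩)
          · exact hxK hx
          · exact hx rfl
      choose ψ hψ1 hψ0 using hbump
      set g : C(X, ℝ) :=
        g₀ + ∑ x ∈ D.attach, (f (x : X) - g₀ (x : X)) • ψ (x : X) x.2 with hg_def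
      have hgval : ∀ y : X, g y
          = g₀ y + ∑ x ∈ D.attach, (f (x : X) - g₀ (x : X)) * ψ (x : X) x.2 y := by
        intro y
        simp [hg_def]
      have hgK : ∀ k : K, g k = h k := by
        intro k
        rw [hgval, hg₀]
        have : ∀ x ∈ D.attach, (f (x : X) - g₀ (x : X)) * ψ (x : X) x.2 (k : X) = 0 := by
          intro x _
          rw [hψ0 (x : X) x.2 (k : X) (Or.inl k.2), mul_zero]
        rw [Finset.sum_eq_zero this, add_zero]
      have hgS : ∀ x ∈ S, g x ∈ u x := by
        intro x hxS
        by_cases hxK : x ∈ K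
        · have hzero : ∀ a ∈ D.attach, (f (a : X) - g₀ (a : X)) * ψ (a : X) a.2 x = 0 := by
            intro a _
            rw [hψ0 (a : X) a.2 x (Or.inl hxK), mul_zero]
          have : g x = h ⟨x, hxK⟩ := by
            rw [hgval, Finset.sum_eq_zero hzero, add_zero]
            exact hg₀ ⟨x, hxK⟩
          rw [this]
          exact hh ⟨x, hxK⟩ hxS
        · have hxD : x ∈ D := Finset.mem_filter.mpr ⟨hxS, hxK⟩
          have hsum : ∑ a ∈ D.attach, (f (a : X) - g₀ (a : X)) * ψ (a : X) a.2 x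
              = f x - g₀ x := by
            rw [Finset.sum_eq_single_of_mem (⟨x, hxD⟩ : {a // a ∈ D})
              (Finset.mem_attach _ _)]
            · rw [hψ1, mul_one]
            · intro b _ hbx
              have hbx' : (b : X) ≠ x := fun hcon => hbx (Subtype.ext hcon)
              rw [hψ0 (b : X) b.2 x (Or.inr ⟨hxD, fun hcon => hbx (Subtype.ext hcon.symm)⟩), mul_zero]
          rw [hgval, hsum]
          have : g₀ x + (f x - g₀ x) = f x := by ring
          rw [this]
          exact (hu x hxS).2
      have hgW : (g : X → ℝ) ∈ W := hsub fun x hx => hgS x hx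
      have hgB : g ∈ interior (r ⁻¹' A n) := by rw [← hWeq]; exact hgW
      have hrg : r g = h := ContinuousMap.ext fun k => hgK k
      have := interior_subset hgB
      rw [Set.mem_preimage, hrg] at this
      exact this
    have hfT : r f ∈ T := by
      intro k hk
      exact (hu (k : X) hk).2
    have : r f ∈ interior (A n) := interior_maximal hTsub hTopen hfT
    rw [hAi n] at this
    exact this
  · -- union is everything
    rw [eq_univ_iff_forall]
    intro g
    have : r g ∈ ⋃ n, A n := hAu ▸ Set.mem_univ _
    obtain ⟨n, hn⟩ := Set.mem_iUnion.mp this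
    exact Set.mem_iUnion.mpr ⟨n, hn⟩
  · -- compact sets
    intro C hC
    obtain ⟨n, hn⟩ := hAk (r '' C) (hC.image hrc)
    exact ⟨n, fun g hg => hn ⟨g, hg, rfl⟩⟩
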